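/- arXiv:0812.3298 — 3 statements merged into one kernel-verified Lean document; each statement's English description precedes it below -/
import Mathlib

section
/- Define algebras H₁, H₂ to be isotyped if for every X the set of realized types coincides: {LKer(μ) | μ : W(X) → H₁} = {LKer(ν) | ν : W(X) → H₂}. Define them to be LG-equivalent if for every X and every T ⊆ Φ(X) the double closures agree: T^{LL}_{H₁} = T^{LL}_{H₂}. Then H₁ and H₂ are LG-equivalent if and only if they are isotyped. (Abstract version: given two Boolean algebra homomorphisms Val₁ : Φ → Set P₁ and Val₂ : Φ → Set P₂, the families of logical kernels {LKer₁(μ) : μ ∈ P₁} and {LKer₂(ν) : ν ∈ P₂} coincide if and only if for every T ⊆ Φ the closures T^{L₁L₁} and T^{L₂L₂} coincide.) -/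
private lemma lg_aux {Φ P₁ P₂ : Type*} [BooleanAlgebra Φ]
    (Val₁ : Φ → Set P₁) (Val₂ : Φ → Set P₂)
    (hBot₁ : Val₁ ⊥ = ∅)
    (hCompl₁ : ∀ u, Val₁ uᶜ = (Val₁ u)ᶜ)
    (hCompl₂ : ∀ u, Val₂ uᶜ = (Val₂ u)ᶜ)
    (h : ∀ T : Set Φ,
        {u : Φ | ∀ μ ∈ {μ : P₁ | ∀ v ∈ T, μ ∈ Val₁ v}, μ ∈ Val₁ u} =
          {u : Φ | ∀ ν ∈ {ν : P₂ | ∀ v ∈ T, ν ∈ Val₂ v}, ν ∈ Val₂ u}) :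
    (Set.range fun μ : P₁ => {u : Φ | μ ∈ Val₁ u}) ⊆
      (Set.range fun ν : P₂ => {u : Φ | ν ∈ Val₂ u}) := by
  rintro K ⟨μ, rfl⟩
  by_cases hne : ∃ ν : P₂, ∀ v ∈ {u : Φ | μ ∈ Val₁ u}, ν ∈ Val₂ v
  · obtain ⟨ν, hν⟩ := hne
    refine ⟨ν, ?_⟩
    ext u
    simp only [Set.mem_setOf_eq]
    constructor
    · intro h2
      by_contra hc
      have h3 : μ ∈ Val₁ uᶜ := by
        rw [hCompl₁]; exact hc
      have : ν ∈ Val₂ uᶜ := hν uᶜ h3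
      rw [hCompl₂] at this
      exact this h2
    · intro h1
      exact hν u h1
  · exfalso
    have hbot : (⊥ : Φ) ∈ {u : Φ | ∀ ν ∈ {ν : P₂ | ∀ v ∈ {u : Φ | μ ∈ Val₁ u}, ν ∈ Val₂ v}, ν ∈ Val₂ u} := by
      intro ν hν
      exact absurd ⟨ν, hν⟩ hne
    rw [← h {u : Φ | μ ∈ Val₁ u}] at hbot
    have : μ ∈ Val₁ ⊥ := hbot μ (fun v hv => hv)
    rw [hBot₁] at this
    exact this

/-- `H₁` and `H₂` are LG-equivalent if and only if they are isotyped
(abstract version for two value homomorphisms into powerset algebras). -/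
theorem lg_equivalent_iff_isotyped {Φ P₁ P₂ : Type*} [BooleanAlgebra Φ]
    (Val₁ : Φ → Set P₁) (Val₂ : Φ → Set P₂)
    (hTop₁ : Val₁ ⊤ = Set.univ) (hBot₁ : Val₁ ⊥ = ∅)
    (hInf₁ : ∀ u v, Val₁ (u ⊓ v) = Val₁ u ∩ Val₁ v)
    (hSup₁ : ∀ u v, Val₁ (u ⊔ v) = Val₁ u ∪ Val₁ v)
    (hCompl₁ : ∀ u, Val₁ uᶜ = (Val₁ u)ᶜ)
    (hTop₂ : Val₂ ⊤ = Set.univ) (hBot₂ : Val₂ ⊥ = ∅)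
    (hInf₂ : ∀ u v, Val₂ (u ⊓ v) = Val₂ u ∩ Val₂ v)
    (hSup₂ : ∀ u v, Val₂ (u ⊔ v) = Val₂ u ∪ Val₂ v)
    (hCompl₂ : ∀ u, Val₂ uᶜ = (Val₂ u)ᶜ) :
    ((Set.range fun μ : P₁ => {u : Φ | μ ∈ Val₁ u}) =
        (Set.range fun ν : P₂ => {u : Φ | ν ∈ Val₂ u})) ↔
      ∀ T : Set Φ,
        {u : Φ | ∀ μ ∈ {μ : P₁ | ∀ v ∈ T, μ ∈ Val₁ v}, μ ∈ Val₁ u} =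
          {u : Φ | ∀ ν ∈ {ν : P₂ | ∀ v ∈ T, ν ∈ Val₂ v}, ν ∈ Val₂ u} := by
  constructor
  · intro h T
    ext u
    simp only [Set.mem_setOf_eq]
    constructor
    · intro h1 ν hν
      have hmem : {w : Φ | ν ∈ Val₂ w} ∈
          (Set.range fun μ : P₁ => {u : Φ | μ ∈ Val₁ u}) := by
        rw [h]; exact ⟨ν, rfl⟩
      obtain ⟨μ, hμ⟩ := hmem
      have key : ∀ w, μ ∈ Val₁ w ↔ ν ∈ Val₂ w := fun w => Set.ext_iff.mp hμ w
      exact (key u).mp (h1 μ (fun v hv => (key v).mpr (hν v hv)))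
    · intro h1 μ hμ
      have hmem : {w : Φ | μ ∈ Val₁ w} ∈
          (Set.range fun ν : P₂ => {u : Φ | ν ∈ Val₂ u}) := by
        rw [← h]; exact ⟨μ, rfl⟩
      obtain ⟨ν, hν⟩ := hmem
      have key : ∀ w, ν ∈ Val₂ w ↔ μ ∈ Val₁ w := fun w => Set.ext_iff.mp hν w
      exact (key u).mp (h1 ν (fun v hv => (key v).mpr (hμ v hv)))
  · intro h
    apply Set.Subset.antisymm
    · exact lg_aux Val₁ Val₂ hBot₁ hCompl₁ hCompl₂ h
    · exact lg_aux Val₂ Val₁ hBot₂ hCompl₂ hCompl₁ (fun T => (h T).symm)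
end

section
/- Let p be a prime and H an infinite abelian group satisfying x^p = 1 for all x (i.e., an infinite vector space over 𝔽_p). Then for every n, the action of Aut(H) on Hⁿ has only finitely many orbits; moreover two tuples (a₁,…,aₙ) and (b₁,…,bₙ) lie in the same orbit if and only if they satisfy the same linear relations, i.e., for all integer coefficients (c₁,…,cₙ), ∑cᵢaᵢ = 0 iff ∑cᵢbᵢ = 0. -/
open Cardinal

section Aux

variable {p : ℕ} [Fact p.Prime] {H : Type*} [AddCommGroup H] [Module (ZMod p) H]

/-- In a `ZMod p`-module, integer smul agrees with the cast scalar smul. -/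
private lemma zsmul_eq_cast_smul' (c : ℤ) (x : H) : c • x = ((c : ZMod p)) • x :=
  (Int.cast_smul_eq_zsmul (ZMod p) c x).symm

private lemma smul_eq_valz_smul' (c : ZMod p) (x : H) : c • x = ((c.val : ℤ)) • x := by
  rw [zsmul_eq_cast_smul' (p := p) ((c.val : ℤ)) x]
  have : (((c.val : ℤ)) : ZMod p) = c := by
    rw [Int.cast_natCast, ZMod.natCast_val, ZMod.cast_id]
  rw [this]

/-- Additive equivalences of `ZMod p`-modules automatically respect linear
combinations. -/
private lemma addAut_map_combination' {n : ℕ} (σ : AddAut H) (c : Fin n → ZMod p)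
    (v : Fin n → H) : σ (∑ i, c i • v i) = ∑ i, c i • σ (v i) := by
  rw [map_sum]
  refine Finset.sum_congr rfl fun i _ => ?_
  rw [smul_eq_valz_smul', smul_eq_valz_smul' (x := σ (v i)), map_zsmul]

private lemma rank_full' [Infinite H] : ℵ₀ ≤ Module.rank (ZMod p) H := by
  by_contra h
  push_neg at h
  have hfin : Module.Finite (ZMod p) H := Module.rank_lt_aleph0_iff.mp h
  haveI : Finite H := Module.finite_of_finite (ZMod p)
  exact not_finite H

/-- A quotient of an infinite-dimensional space by a finite-rank submodule has
full rank. -/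
private lemma rank_quotient_eq' [Infinite H] (W : Submodule (ZMod p) H)
    (hW : Module.rank (ZMod p) W < ℵ₀) :
    Module.rank (ZMod p) (H ⧸ W) = Module.rank (ZMod p) H := by
  have hsum := Submodule.rank_quotient_add_rank W
  have hH : ℵ₀ ≤ Module.rank (ZMod p) H := rank_full'
  set a := Module.rank (ZMod p) (H ⧸ W)
  have ha : ℵ₀ ≤ a := by
    by_contra h
    push_neg at h
    exact absurd (hsum ▸ hH) (not_le.mpr (Cardinal.add_lt_aleph0 h hW))
  refine le_antisymm ?_ ?_
  · calc a ≤ a + Module.rank (ZMod p) W := le_self_add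
      _ = Module.rank (ZMod p) H := hsum
  · calc Module.rank (ZMod p) H = a + Module.rank (ZMod p) W := hsum.symm
      _ ≤ a + a := add_le_add le_rfl (hW.le.trans ha)
      _ = a := Cardinal.add_eq_self ha

/-- The key construction: two tuples satisfying the same `ZMod p`-linear
relations are related by an automorphism. -/
private lemma exists_aut_of_same_relations' [Infinite H] {n : ℕ} (a b : Fin n → H)
    (hrel : ∀ c : Fin n → ZMod p, (∑ i, c i • a i = 0 ↔ ∑ i, c i • b i = 0)) :
    ∃ σ : AddAut H, ∀ i, σ (a i) = b i := by
  classical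
  set f : (Fin n → ZMod p) →ₗ[ZMod p] H :=
    Fintype.linearCombination (ZMod p) a with hf
  set g : (Fin n → ZMod p) →ₗ[ZMod p] H :=
    Fintype.linearCombination (ZMod p) b with hg
  have hfb : ∀ c, f c = ∑ i, c i • a i := fun c => by
    rw [hf, Fintype.linearCombination_apply]
  have hgb : ∀ c, g c = ∑ i, c i • b i := fun c => by
    rw [hg, Fintype.linearCombination_apply]
  have hker : LinearMap.ker f = LinearMap.ker g := by
    ext c
    simp only [LinearMap.mem_ker, hfb, hgb]
    exact hrel c
  let e : LinearMap.range f ≃ₗ[ZMod p] LinearMap.range g :=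
    f.quotKerEquivRange.symm.trans
      ((Submodule.quotEquivOfEq _ _ hker).trans g.quotKerEquivRange)
  have he : ∀ x : Fin n → ZMod p,
      (e ⟨f x, LinearMap.mem_range_self f x⟩ : H) = g x := by
    intro x
    have h1 : f.quotKerEquivRange (Submodule.Quotient.mk x)
        = ⟨f x, LinearMap.mem_range_self f x⟩ :=
      Subtype.ext (f.quotKerEquivRange_apply_mk x)
    show ((g.quotKerEquivRange ((Submodule.quotEquivOfEq _ _ hker)
        (f.quotKerEquivRange.symm ⟨f x, LinearMap.mem_range_self f x⟩)) : _) : H) = g x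
    rw [← h1, LinearEquiv.symm_apply_apply, Submodule.quotEquivOfEq_mk]
    exact g.quotKerEquivRange_apply_mk x
  -- complements
  obtain ⟨U, hU⟩ := Submodule.exists_isCompl (LinearMap.range f)
  obtain ⟨V, hV⟩ := Submodule.exists_isCompl (LinearMap.range g)
  have hrkf : Module.rank (ZMod p) (LinearMap.range f) < ℵ₀ :=
    Module.rank_lt_aleph0 _ _
  have hrkg : Module.rank (ZMod p) (LinearMap.range g) < ℵ₀ :=
    Module.rank_lt_aleph0 _ _
  have hranks : Module.rank (ZMod p) U = Module.rank (ZMod p) V := by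
    have h1 := (Submodule.quotientEquivOfIsCompl _ _ hU).symm.rank_eq
    have h2 := (Submodule.quotientEquivOfIsCompl _ _ hV).symm.rank_eq
    rw [h1, h2, rank_quotient_eq' _ hrkf, rank_quotient_eq' _ hrkg]
  obtain ⟨u⟩ := nonempty_linearEquiv_of_rank_eq hranks
  let τ : H ≃ₗ[ZMod p] H :=
    (Submodule.prodEquivOfIsCompl _ _ hU).symm.trans
      ((e.prodCongr u).trans (Submodule.prodEquivOfIsCompl _ _ hV))
  refine ⟨τ.toAddEquiv, fun i => ?_⟩
  have hai : a i = f (Pi.single i 1) := by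
    rw [Fintype.linearCombination_apply_single, one_smul]
  have hbi : b i = g (Pi.single i 1) := by
    rw [Fintype.linearCombination_apply_single, one_smul]
  show τ (a i) = b i
  have hmem : a i ∈ LinearMap.range f := hai ▸ LinearMap.mem_range_self f _
  have hstep : (Submodule.prodEquivOfIsCompl (LinearMap.range f) U hU).symm (a i)
      = ((⟨a i, hmem⟩ : ↥(LinearMap.range f)), (0 : ↥U)) := by
    have := Submodule.prodEquivOfIsCompl_symm_apply_left (LinearMap.range f) U hU
      (⟨a i, hmem⟩ : ↥(LinearMap.range f))
    simpa using this
  simp only [τ, LinearEquiv.trans_apply, hstep]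
  have : (e.prodCongr u) ((⟨a i, hmem⟩ : ↥(LinearMap.range f)), (0 : ↥U))
      = (e ⟨a i, hmem⟩, 0) := Prod.ext rfl (map_zero u)
  rw [this]
  have hcoe : ((e ⟨a i, hmem⟩ : ↥(LinearMap.range g)) : H) = b i := by
    have : (⟨a i, hmem⟩ : ↥(LinearMap.range f))
        = ⟨f (Pi.single i 1), LinearMap.mem_range_self f _⟩ := by
      ext; exact hai
    rw [this, he, ← hbi]
  calc (Submodule.prodEquivOfIsCompl (LinearMap.range g) V hV) (e ⟨a i, hmem⟩, 0)
      = ((e ⟨a i, hmem⟩ : ↥(LinearMap.range g)) : H) + ((0 : ↥V) : H) := rfl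
    _ = b i := by rw [hcoe]; simp

end Aux

/-- An infinite abelian group of prime exponent `p` is automorphically finitary:
the diagonal action of `Aut H` on `Hⁿ` has finitely many orbits, and two tuples
are in the same orbit iff they satisfy the same linear relations. -/
theorem elementary_abelian_aut_finitary {H : Type*} [AddCommGroup H] [Infinite H]
    (p : ℕ) (hp : p.Prime) (hExp : ∀ x : H, p • x = 0) (n : ℕ) :
    (Set.Finite (Set.range fun a : Fin n → H =>
        {b : Fin n → H | ∃ σ : AddAut H, ∀ i, σ (a i) = b i})) ∧
      ∀ a b : Fin n → H,
        (∃ σ : AddAut H, ∀ i, σ (a i) = b i) ↔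
          ∀ c : Fin n → ℤ, (∑ i, c i • a i = 0 ↔ ∑ i, c i • b i = 0) := by
  haveI : Fact p.Prime := ⟨hp⟩
  haveI : NeZero p := ⟨hp.ne_zero⟩
  letI : Module (ZMod p) H := AddCommGroup.zmodModule hExp
  -- the key equivalence with ZMod p coefficients
  have key : ∀ a b : Fin n → H,
      (∃ σ : AddAut H, ∀ i, σ (a i) = b i) ↔
      ∀ c : Fin n → ZMod p, (∑ i, c i • a i = 0 ↔ ∑ i, c i • b i = 0) := by
    intro a b
    constructor
    · rintro ⟨σ, hσ⟩ c
      have h1 : σ (∑ i, c i • a i) = ∑ i, c i • b i := by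
        rw [addAut_map_combination']
        exact Finset.sum_congr rfl fun i _ => by rw [hσ]
      constructor
      · intro h; rw [← h1, h, map_zero]
      · intro h
        have : σ (∑ i, c i • a i) = σ 0 := by rw [h1, h, map_zero]
        exact σ.injective this
    · exact exists_aut_of_same_relations' a b
  -- bridge between ℤ and ZMod p coefficients
  have bridge : ∀ a b : Fin n → H,
      (∀ c : Fin n → ZMod p, (∑ i, c i • a i = 0 ↔ ∑ i, c i • b i = 0)) ↔
      (∀ c : Fin n → ℤ, (∑ i, c i • a i = 0 ↔ ∑ i, c i • b i = 0)) := by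
    intro a b
    constructor
    · intro h c
      have ha : ∑ i, c i • a i = ∑ i, ((c i : ZMod p)) • a i :=
        Finset.sum_congr rfl fun i _ => zsmul_eq_cast_smul' _ _
      have hb : ∑ i, c i • b i = ∑ i, ((c i : ZMod p)) • b i :=
        Finset.sum_congr rfl fun i _ => zsmul_eq_cast_smul' _ _
      rw [ha, hb]
      exact h _
    · intro h c
      have ha : ∑ i, c i • a i = ∑ i, (((c i).val : ℤ)) • a i :=
        Finset.sum_congr rfl fun i _ => smul_eq_valz_smul' _ _
      have hb : ∑ i, c i • b i = ∑ i, (((c i).val : ℤ)) • b i :=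
        Finset.sum_congr rfl fun i _ => smul_eq_valz_smul' _ _
      rw [ha, hb]
      exact h _
  refine ⟨?_, fun a b => (key a b).trans (bridge a b)⟩
  -- finiteness: the orbit of `a` is determined by its relation set
  have horb : ∀ a : Fin n → H, {b : Fin n → H | ∃ σ : AddAut H, ∀ i, σ (a i) = b i}
      = (fun S : Set (Fin n → ZMod p) =>
          {b : Fin n → H | ∀ c, (c ∈ S ↔ ∑ i, c i • b i = 0)})
        {c : Fin n → ZMod p | ∑ i, c i • a i = 0} := by
    intro a
    ext b
    rw [Set.mem_setOf_eq, key a b]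
    rfl
  apply Set.Finite.subset (Set.finite_range (fun S : Set (Fin n → ZMod p) =>
    {b : Fin n → H | ∀ c, (c ∈ S ↔ ∑ i, c i • b i = 0)}))
  rintro _ ⟨a, rfl⟩
  exact ⟨_, (horb a).symm⟩
end

section
/- An algebra H is logically perfect if and only if for every finite X, every Aut(H)-orbit in Hom(W(X),H) is an elementary set. (Abstract version: given a Boolean algebra homomorphism Val : Φ → Set P and a group G acting on P such that every set Val(u) is G-invariant, the following are equivalent: (1) for all μ, ν ∈ P, LKer(μ) = LKer(ν) implies μ and ν lie in the same G-orbit; (2) every G-orbit in P is of the form T^L for some T ⊆ Φ.) -/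
/-- An algebra is logically perfect iff every orbit of the automorphism group is
an elementary set (abstract version: `G` acts on the set of points `P`, each
value set is `G`-invariant). -/
theorem logically_perfect_iff_orbits_elementary {Φ P G : Type*} [BooleanAlgebra Φ]
    [Group G] [MulAction G P]
    (Val : Φ → Set P)
    (hTop : Val ⊤ = Set.univ) (hBot : Val ⊥ = ∅)
    (hInf : ∀ u v, Val (u ⊓ v) = Val u ∩ Val v)
    (hSup : ∀ u v, Val (u ⊔ v) = Val u ∪ Val v)
    (hCompl : ∀ u, Val uᶜ = (Val u)ᶜ)
    (hInv : ∀ (g : G) (u : Φ) (μ : P), g • μ ∈ Val u ↔ μ ∈ Val u) :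
    (∀ μ ν : P, {u : Φ | μ ∈ Val u} = {u : Φ | ν ∈ Val u} →
        ∃ g : G, g • μ = ν) ↔
      ∀ μ : P, ∃ T : Set Φ,
        MulAction.orbit G μ = {ν : P | ∀ u ∈ T, ν ∈ Val u} := by
  constructor
  · intro h μ
    refine ⟨{u : Φ | μ ∈ Val u}, Set.ext fun ν => ?_⟩
    constructor
    · rintro ⟨g, rfl⟩ u hu
      exact (hInv g u μ).mpr hu
    · intro hν
      exact h μ ν (Set.ext fun u => ⟨fun hu => hν u hu, fun hu => by
        by_contra hμ
        have h1 : μ ∈ Val uᶜ := by rw [hCompl]; exact hμ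
        have h2 : ν ∈ Val uᶜ := hν uᶜ h1
        rw [hCompl] at h2
        exact h2 hu⟩)
  · intro h μ ν hker
    obtain ⟨T, hT⟩ := h μ
    have hμT : ∀ u ∈ T, μ ∈ Val u := by
      have : μ ∈ MulAction.orbit G μ := MulAction.mem_orbit_self μ
      rw [hT] at this; exact this
    have hνT : ν ∈ MulAction.orbit G μ := by
      rw [hT]
      intro u hu
      rw [Set.ext_iff] at hker
      exact (hker u).mp (hμT u hu)
    obtain ⟨g, hg⟩ := hνT
    exact ⟨g, hg⟩
end
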